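/- There is a constant c > 0 depending only on n such that for every locally integrable f : ℝⁿ₊ → ℝ one has ‖f_o‖_{BMO} ≤ c ‖f_z‖_{BMO} and ‖f_z‖_{BMO} ≤ c ‖f_o‖_{BMO} (as extended real numbers), where f_z is the zero extension and f_o the odd extension of f. In particular, the zero extension of f belongs to BMO(ℝⁿ) if and only if the odd extension of f belongs to BMO(ℝⁿ). -/

import Mathlib

open MeasureTheory ENNReal Real Set

noncomputable section

/-- `ℝⁿ` with the Euclidean norm. -/
abbrev En (n : ℕ) := EuclideanSpace ℝ (Fin n)

/-- Axis-parallel cube with lower corner `a` and side length `l`. -/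
def cube {n : ℕ} (a : En n) (l : ℝ) : Set (En n) :=
  {x | ∀ i, x i ∈ Set.Icc (a i) (a i + l)}

/-- The classical BMO seminorm (as an extended real number):
`sup_Q (1/|Q|) ∫_Q |f - f_Q|`, supremum over all axis-parallel cubes. -/
def bmoNorm {n : ℕ} (f : En n → ℝ) : ℝ≥0∞ :=
  ⨆ (a : En n) (l : ℝ) (_ : 0 < l),
    (∫⁻ x in cube a l, ENNReal.ofReal |f x - ⨍ y in cube a l, f y|) / volume (cube a l)

/-- The last coordinate `x_n` of a point of `ℝ^{n+1}`. -/
def lastC {n : ℕ} (x : En (n + 1)) : ℝ := x (Fin.last n)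

/-- Reflection `x̃ = (x', -x_n)` across the hyperplane `{x_n = 0}`. -/
def reflx {n : ℕ} (x : En (n + 1)) : En (n + 1) :=
  WithLp.toLp 2 (Function.update x (Fin.last n) (-(x (Fin.last n))))

/-- Upper half space `ℝⁿ₊ = {x : x_n > 0}`. -/
def upperHalf (n : ℕ) : Set (En (n + 1)) := {x | 0 < lastC x}

/-- Lower half space `ℝⁿ₋ = {x : x_n < 0}`. -/
def lowerHalf (n : ℕ) : Set (En (n + 1)) := {x | lastC x < 0}

/-- Even extension of a function given on the upper half space. -/
def evenExt {n : ℕ} (f : En (n + 1) → ℝ) : En (n + 1) → ℝ :=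
  fun x => if 0 < lastC x then f x else f (reflx x)

/-- Odd extension of a function given on the upper half space. -/
def oddExt {n : ℕ} (f : En (n + 1) → ℝ) : En (n + 1) → ℝ :=
  fun x => if 0 < lastC x then f x else -f (reflx x)

/-- Zero extension of a function given on the upper half space. -/
def zeroExt {n : ℕ} (f : En (n + 1) → ℝ) : En (n + 1) → ℝ :=
  fun x => if 0 < lastC x then f x else 0

end

noncomputable section

section Aux

variable {n : ℕ}

lemma reflx_apply (x : En (n + 1)) (i : Fin (n + 1)) :
    reflx x i = if i = Fin.last n then -(x (Fin.last n)) else x i := by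
  simp [reflx, Function.update_apply]

lemma reflx_last (x : En (n + 1)) : lastC (reflx x) = -(lastC x) := by
  simp [lastC, reflx_apply]

lemma reflx_involutive : Function.Involutive (reflx (n := n)) := by
  intro x
  ext i
  rcases eq_or_ne i (Fin.last n) with h | h
  · subst h; rw [reflx_apply, if_pos rfl, reflx_apply, if_pos rfl, neg_neg]
  · rw [reflx_apply, if_neg h, reflx_apply, if_neg h]

lemma cube_eq_preimage (a : En n) (l : ℝ) :
    cube a l = (MeasurableEquiv.toLp 2 (Fin n → ℝ)).symm ⁻¹'
      (Set.univ.pi fun i => Icc (a i) (a i + l)) := by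
  ext x
  exact ⟨fun h i _ => h i, fun h i => h i (Set.mem_univ i)⟩

lemma measurableSet_cube (a : En n) (l : ℝ) : MeasurableSet (cube a l) := by
  rw [cube_eq_preimage]
  exact (MeasurableEquiv.toLp 2 (Fin n → ℝ)).symm.measurable
    (MeasurableSet.univ_pi fun i => measurableSet_Icc)

lemma volume_cube (a : En n) (l : ℝ) :
    volume (cube a l) = ENNReal.ofReal l ^ n := by
  rw [cube_eq_preimage,
    (EuclideanSpace.volume_preserving_symm_measurableEquiv_toLp (Fin n)).measure_preimage
      ((MeasurableSet.univ_pi fun i => measurableSet_Icc).nullMeasurableSet),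
    volume_pi_pi]
  simp [Real.volume_Icc]

lemma measurable_lastC : Measurable (lastC (n := n)) := by
  have : lastC (n := n) = (fun y : Fin (n+1) → ℝ => y (Fin.last n)) ∘
      (MeasurableEquiv.toLp 2 (Fin (n+1) → ℝ)).symm := rfl
  rw [this]
  exact (measurable_pi_apply _).comp (MeasurableEquiv.toLp 2 (Fin (n+1) → ℝ)).symm.measurable

lemma measurableSet_upperHalf : MeasurableSet (upperHalf n) :=
  measurableSet_lt measurable_const measurable_lastC

lemma measurePreserving_reflx : MeasurePreserving (reflx (n := n)) volume volume := by
  classical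
  set f : Fin (n+1) → ℝ → ℝ := fun i => if i = Fin.last n then (fun t => -t) else id with hf
  have hfi : ∀ i, MeasurePreserving (f i) volume volume := by
    intro i
    by_cases h : i = Fin.last n <;> simp [hf, h]
    · exact Measure.measurePreserving_neg _
    · exact MeasurePreserving.id _
  have hpi := measurePreserving_pi (fun _ => (volume : Measure ℝ)) (fun _ => volume) hfi
  have h1 := EuclideanSpace.volume_preserving_symm_measurableEquiv_toLp (Fin (n+1))
  have hsym := (EuclideanSpace.volume_preserving_symm_measurableEquiv_toLp (Fin (n+1))).symm
  have h2 := (hsym.comp hpi).comp h1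
  refine Eq.subst (motive := fun g => MeasurePreserving g volume volume) (Eq.symm ?_) h2
  funext x
  ext i
  show reflx x i = f i (x i)
  rw [reflx_apply]
  rcases eq_or_ne i (Fin.last n) with h | h
  · subst h; simp [hf]
  · simp [hf, h]

def reflE : En (n + 1) ≃ᵐ En (n + 1) where
  toEquiv := reflx_involutive.toPerm
  measurable_toFun := measurePreserving_reflx.measurable
  measurable_invFun := measurePreserving_reflx.measurable

lemma reflE_coe : (reflE (n := n) : En (n+1) → En (n+1)) = reflx := rfl

lemma volume_hyperplane : volume {x : En (n + 1) | lastC x = 0} = 0 := by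
  classical
  have : {x : En (n + 1) | lastC x = 0} = (MeasurableEquiv.toLp 2 (Fin (n+1) → ℝ)).symm ⁻¹'
      (Set.univ.pi fun i => if i = Fin.last n then ({0} : Set ℝ) else univ) := by
    ext x
    simp only [Set.mem_setOf_eq, Set.mem_preimage, Set.mem_pi, Set.mem_univ, forall_true_left]
    constructor
    · intro h i
      by_cases hi : i = Fin.last n <;> simp [hi]
      · subst hi; exact h
    · intro h
      have := h (Fin.last n)
      simpa [lastC] using this
  rw [this,
    (EuclideanSpace.volume_preserving_symm_measurableEquiv_toLp (Fin (n+1))).measure_preimage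
      ((MeasurableSet.univ_pi fun i => by
        split
        exacts [measurableSet_singleton 0, MeasurableSet.univ]).nullMeasurableSet),
    volume_pi_pi]
  refine Finset.prod_eq_zero (Finset.mem_univ (Fin.last n)) ?_
  simp

lemma reflx_preimage_cube (a : En (n+1)) (l : ℝ) :
    reflx ⁻¹' (cube a l) =
      cube (WithLp.toLp 2 (Function.update a (Fin.last n) (-(a (Fin.last n)) - l))) l := by
  ext x
  simp only [Set.mem_preimage, cube, Set.mem_setOf_eq, Set.mem_Icc, WithLp.ofLp_toLp]
  constructor
  · intro h i
    rcases eq_or_ne i (Fin.last n) with hil | hil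
    · subst hil
      have hi := h (Fin.last n)
      rw [reflx_apply, if_pos rfl] at hi
      rw [Function.update_self]
      exact ⟨by linarith [hi.2], by linarith [hi.1]⟩
    · have hi := h i
      rw [reflx_apply, if_neg hil] at hi
      rw [Function.update_of_ne hil]
      exact hi
  · intro h i
    rcases eq_or_ne i (Fin.last n) with hil | hil
    · subst hil
      have hi := h (Fin.last n)
      rw [Function.update_self] at hi
      rw [reflx_apply, if_pos rfl]
      exact ⟨by linarith [hi.2], by linarith [hi.1]⟩
    · have hi := h i
      rw [Function.update_of_ne hil] at hi
      rw [reflx_apply, if_neg hil]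
      exact hi

end Aux

section Aux2

variable {n : ℕ}

/-- The summand of the BMO supremum for one cube. -/
def cubeTerm (f : En n → ℝ) (a : En n) (l : ℝ) : ℝ≥0∞ :=
  (∫⁻ x in cube a l, ENNReal.ofReal |f x - ⨍ y in cube a l, f y|) / volume (cube a l)

lemma bmoNorm_eq (f : En n → ℝ) :
    bmoNorm f = ⨆ (a : En n) (l : ℝ) (_ : 0 < l), cubeTerm f a l := rfl

lemma cubeTerm_le_bmoNorm (f : En n → ℝ) (a : En n) {l : ℝ} (hl : 0 < l) :
    cubeTerm f a l ≤ bmoNorm f := by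
  rw [bmoNorm_eq]
  exact le_iSup_of_le a (le_iSup_of_le l (le_iSup_of_le hl le_rfl))

lemma bmoNorm_le (f : En n → ℝ) (C : ℝ≥0∞)
    (h : ∀ a l, 0 < l → cubeTerm f a l ≤ C) : bmoNorm f ≤ C := by
  rw [bmoNorm_eq]
  exact iSup_le fun a => iSup_le fun l => iSup_le fun hl => h a l hl

lemma volume_cube_ne_zero (a : En n) {l : ℝ} (hl : 0 < l) : volume (cube a l) ≠ 0 := by
  rw [volume_cube]
  exact pow_ne_zero _ (by simpa using (ENNReal.ofReal_pos.2 hl).ne')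

lemma volume_cube_ne_top (a : En n) (l : ℝ) : volume (cube a l) ≠ ⊤ := by
  rw [volume_cube]
  exact (pow_lt_top ENNReal.ofReal_lt_top).ne

lemma lintegral_le_of_bmo (f : En n → ℝ) (a : En n) {l : ℝ} (hl : 0 < l) :
    (∫⁻ x in cube a l, ENNReal.ofReal |f x - ⨍ y in cube a l, f y|) ≤
      bmoNorm f * volume (cube a l) := by
  have h := cubeTerm_le_bmoNorm f a hl
  rw [cubeTerm, ENNReal.div_le_iff_le_mul (Or.inl (volume_cube_ne_zero a hl))
    (Or.inl (volume_cube_ne_top a l))] at h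
  exact h

lemma lintegral_reflx (H : En (n+1) → ℝ≥0∞) (s : Set (En (n+1))) (hs : MeasurableSet s) :
    ∫⁻ x in reflx ⁻¹' s, H (reflx x) = ∫⁻ y in s, H y := by
  have hmp : MeasurePreserving (reflx (n := n))
      (volume.restrict (reflx ⁻¹' s)) (volume.restrict s) :=
    measurePreserving_reflx.restrict_preimage hs
  have h1 : volume.restrict s =
      Measure.map (reflE (n := n)) (volume.restrict (reflx ⁻¹' s)) := by
    rw [show ⇑(reflE (n := n)) = reflx from rfl, hmp.map_eq]
  rw [h1, lintegral_map_equiv]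
  rfl

lemma integral_reflx (g : En (n+1) → ℝ) (s : Set (En (n+1))) (hs : MeasurableSet s) :
    ∫ x in reflx ⁻¹' s, g (reflx x) = ∫ y in s, g y :=
  (measurePreserving_reflx.restrict_preimage hs).integral_comp
    (reflE (n := n)).measurableEmbedding g

lemma integrableOn_reflx_iff (g : En (n+1) → ℝ) (s : Set (En (n+1))) (hs : MeasurableSet s) :
    IntegrableOn (fun x => g (reflx x)) (reflx ⁻¹' s) volume ↔ IntegrableOn g s volume :=
  (measurePreserving_reflx.restrict_preimage hs).integrable_comp_emb
    (reflE (n := n)).measurableEmbedding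

lemma ae_lastC_ne : ∀ᵐ x : En (n+1), lastC x ≠ 0 := by
  have := volume_hyperplane (n := n)
  rw [ae_iff]
  simpa using this

lemma oddExt_reflx_ae (f : En (n+1) → ℝ) :
    ∀ᵐ x : En (n+1), oddExt f (reflx x) = -oddExt f x := by
  filter_upwards [ae_lastC_ne] with x hx
  rcases lt_or_gt_of_ne hx with h | h
  · have h' : 0 < lastC (reflx x) := by rw [reflx_last]; linarith
    simp only [oddExt, if_pos h', if_neg (not_lt.2 h.le), reflx_involutive x, neg_neg]
  · have h' : ¬ (0 < lastC (reflx x)) := by rw [reflx_last]; push_neg; linarith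
    simp only [oddExt, if_neg h', if_pos h, reflx_involutive x]

lemma oddExt_eq_sub_ae (f : En (n+1) → ℝ) :
    ∀ᵐ x : En (n+1), oddExt f x = zeroExt f x - zeroExt f (reflx x) := by
  filter_upwards [ae_lastC_ne] with x hx
  rcases lt_or_gt_of_ne hx with h | h
  · have h' : 0 < lastC (reflx x) := by rw [reflx_last]; linarith
    simp only [oddExt, zeroExt, if_pos h', if_neg (not_lt.2 h.le)]
    ring
  · have h' : ¬ (0 < lastC (reflx x)) := by rw [reflx_last]; push_neg; linarith
    simp only [oddExt, zeroExt, if_neg h', if_pos h]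
    ring

lemma abs_zeroExt_le (f : En (n+1) → ℝ) (x : En (n+1)) :
    |zeroExt f x| ≤ |oddExt f x| := by
  simp only [zeroExt, oddExt]
  split
  · exact le_rfl
  · simp [abs_nonneg]

lemma zeroExt_aesm (f : En (n+1) → ℝ)
    (hf : LocallyIntegrableOn f (upperHalf n) volume) :
    AEStronglyMeasurable (zeroExt f) volume := by
  have h1 : AEStronglyMeasurable f (volume.restrict (upperHalf n)) :=
    hf.aestronglyMeasurable
  obtain ⟨f', hf'm, hff'⟩ := h1
  refine ⟨(upperHalf n).indicator f', hf'm.indicator measurableSet_upperHalf, ?_⟩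
  have := (ae_restrict_iff' measurableSet_upperHalf).1 hff'
  filter_upwards [this] with x hx
  by_cases h : 0 < lastC x
  · have hxu : x ∈ upperHalf n := h
    simp only [zeroExt, if_pos h, Set.indicator_of_mem hxu]
    exact hx hxu
  · have hxu : x ∉ upperHalf n := h
    simp only [zeroExt, if_neg h, Set.indicator_of_notMem hxu]

lemma oddExt_aesm (f : En (n+1) → ℝ)
    (hf : LocallyIntegrableOn f (upperHalf n) volume) :
    AEStronglyMeasurable (oddExt f) volume := by
  have hz := zeroExt_aesm f hf
  have hzr : AEStronglyMeasurable (fun x => zeroExt f (reflx x)) volume :=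
    hz.comp_quasiMeasurePreserving measurePreserving_reflx.quasiMeasurePreserving
  have h : (fun x => zeroExt f x - zeroExt f (reflx x)) =ᶠ[ae volume] oddExt f :=
    (oddExt_eq_sub_ae f).mono fun x hx => hx.symm
  exact (hz.sub hzr).congr h

end Aux2
section Main

variable {n : ℕ}

lemma cubeTerm_eq_top (g : En (n+1) → ℝ) (hgm : AEStronglyMeasurable g volume)
    (a : En (n+1)) (l : ℝ) (h : ¬ IntegrableOn g (cube a l) volume) :
    cubeTerm g a l = ⊤ := by
  set Q := cube a l with hQ
  set c₀ := ⨍ y in Q, g y with hc₀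
  have hinf : (∫⁻ x in Q, ENNReal.ofReal |g x|) = ⊤ := by
    by_contra hne
    refine h ⟨hgm.restrict, ?_⟩
    rw [HasFiniteIntegral]
    have : ∀ x, ‖g x‖ₑ = ENNReal.ofReal |g x| := fun x => Real.enorm_eq_ofReal_abs _
    simp only [this]
    exact lt_top_iff_ne_top.2 hne
  have hle : (∫⁻ x in Q, ENNReal.ofReal |g x|) ≤
      (∫⁻ x in Q, ENNReal.ofReal |g x - c₀|) + ENNReal.ofReal |c₀| * volume Q := by
    calc (∫⁻ x in Q, ENNReal.ofReal |g x|)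
        ≤ ∫⁻ x in Q, (ENNReal.ofReal |g x - c₀| + ENNReal.ofReal |c₀|) := by
          refine lintegral_mono fun x => ?_
          calc ENNReal.ofReal |g x| ≤ ENNReal.ofReal (|g x - c₀| + |c₀|) :=
                ENNReal.ofReal_le_ofReal (by
                  calc |g x| = |(g x - c₀) + c₀| := by ring_nf
                  _ ≤ |g x - c₀| + |c₀| := abs_add_le _ _)
          _ ≤ _ := ENNReal.ofReal_add_le
      _ = _ := by rw [lintegral_add_right' _ aemeasurable_const, setLIntegral_const]
  have htop : (∫⁻ x in Q, ENNReal.ofReal |g x - c₀|) = ⊤ := by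
    by_contra hne
    have hlt : (∫⁻ x in Q, ENNReal.ofReal |g x|) < ⊤ :=
      lt_of_le_of_lt hle (ENNReal.add_lt_top.2 ⟨lt_top_iff_ne_top.2 hne,
        ENNReal.mul_lt_top ENNReal.ofReal_lt_top
          (lt_top_iff_ne_top.2 (volume_cube_ne_top a l))⟩)
    rw [hinf] at hlt
    exact absurd hlt (lt_irrefl _)
  rw [cubeTerm, ← hQ, ← hc₀, htop, ENNReal.top_div_of_ne_top (volume_cube_ne_top a l)]

lemma dir1 (f : En (n+1) → ℝ) (hf : LocallyIntegrableOn f (upperHalf n) volume) :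
    bmoNorm (oddExt f) ≤ (2 : ℝ≥0∞) ^ (n + 3) * bmoNorm (zeroExt f) := by
  have hgm := zeroExt_aesm f hf
  set g := zeroExt f with hg
  set F := oddExt f with hF
  refine bmoNorm_le F _ fun a l hl => ?_
  set Q := cube a l with hQ
  set at' := WithLp.toLp 2 (Function.update a (Fin.last n) (-(a (Fin.last n)) - l)) with hat
  have hpre1 : reflx ⁻¹' Q = cube at' l := reflx_preimage_cube a l
  have hpre2 : reflx ⁻¹' (cube at' l) = Q := by
    rw [reflx_preimage_cube, hQ, hat, WithLp.ofLp_toLp, Function.update_self, Function.update_idem,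
      show -(-(a (Fin.last n)) - l) - l = a (Fin.last n) from by ring,
      Function.update_eq_self (Fin.last n) a, WithLp.toLp_ofLp]
  by_cases hint : IntegrableOn g Q volume ∧ IntegrableOn g (cube at' l) volume
  · obtain ⟨hint1, hint2⟩ := hint
    have hint2' : IntegrableOn (fun x => g (reflx x)) Q volume := by
      have := (integrableOn_reflx_iff g (cube at' l) (measurableSet_cube _ _)).2 hint2
      rwa [hpre2] at this
    have hFQae : F =ᶠ[ae (volume.restrict Q)] fun x => g x - g (reflx x) :=
      ae_restrict_of_ae (oddExt_eq_sub_ae f)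
    have hvol : volume (cube at' l) = volume Q := by
      rw [hQ, volume_cube, volume_cube]
    have havg : (⨍ y in Q, F y) = (⨍ y in Q, g y) - ⨍ y in cube at' l, g y := by
      rw [average_congr hFQae, setAverage_eq, setAverage_eq, setAverage_eq,
        integral_sub hint1 hint2']
      have h2 : ∫ x in Q, g (reflx x) = ∫ y in cube at' l, g y := by
        have h2x := integral_reflx g (cube at' l) (measurableSet_cube at' l)
        rwa [hpre2] at h2x
      rw [h2, measureReal_def, measureReal_def, hvol, smul_sub]
    set c₁ := ⨍ y in Q, g y with hc₁
    set c₂ := ⨍ y in cube at' l, g y with hc₂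
    have key : (∫⁻ x in Q, ENNReal.ofReal |F x - ⨍ y in Q, F y|) ≤
        (∫⁻ x in Q, ENNReal.ofReal |g x - c₁|) +
          ∫⁻ x in Q, ENNReal.ofReal |g (reflx x) - c₂| := by
      have hptwise : ∀ᵐ x ∂(volume.restrict Q),
          ENNReal.ofReal |F x - ⨍ y in Q, F y| ≤
            ENNReal.ofReal |g x - c₁| + ENNReal.ofReal |g (reflx x) - c₂| := by
        filter_upwards [hFQae] with x hx
        rw [havg, hx]
        calc ENNReal.ofReal |g x - g (reflx x) - (c₁ - c₂)|
            ≤ ENNReal.ofReal (|g x - c₁| + |g (reflx x) - c₂|) :=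
              ENNReal.ofReal_le_ofReal (by
                rw [show g x - g (reflx x) - (c₁ - c₂) = (g x - c₁) - (g (reflx x) - c₂) by ring]
                exact abs_sub _ _)
          _ ≤ _ := ENNReal.ofReal_add_le
      calc (∫⁻ x in Q, ENNReal.ofReal |F x - ⨍ y in Q, F y|)
          ≤ ∫⁻ x in Q, (ENNReal.ofReal |g x - c₁| + ENNReal.ofReal |g (reflx x) - c₂|) :=
            lintegral_mono_ae hptwise
        _ = _ := by
            have hmeas : Measurable fun t : ℝ => ENNReal.ofReal |t - c₂| := by
              fun_prop
            refine lintegral_add_left' ?_ _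
            have : AEMeasurable g (volume.restrict Q) := hgm.aemeasurable.restrict
            have hmeas1 : Measurable fun t : ℝ => ENNReal.ofReal |t - c₁| := by fun_prop
            exact hmeas1.comp_aemeasurable this
    have hrefl : (∫⁻ x in Q, ENNReal.ofReal |g (reflx x) - c₂|) =
        ∫⁻ y in cube at' l, ENNReal.ofReal |g y - c₂| := by
      have h3x := lintegral_reflx (fun y => ENNReal.ofReal |g y - c₂|) (cube at' l)
        (measurableSet_cube at' l)
      rwa [hpre2] at h3x
    calc cubeTerm F a l
        ≤ ((∫⁻ x in Q, ENNReal.ofReal |g x - c₁|) +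
            ∫⁻ y in cube at' l, ENNReal.ofReal |g y - c₂|) / volume Q := by
          rw [cubeTerm, ← hQ]
          exact ENNReal.div_le_div_right (by rw [← hrefl]; exact key) _
      _ ≤ (bmoNorm g * volume Q + bmoNorm g * volume (cube at' l)) / volume Q := by
          gcongr
          · exact lintegral_le_of_bmo g a hl
          · exact lintegral_le_of_bmo g at' hl
      _ = (2 * bmoNorm g) * (volume Q / volume Q) := by
          rw [hvol, ← two_mul, div_eq_mul_inv, div_eq_mul_inv]
          ring
      _ ≤ 2 * bmoNorm g := by
          rw [ENNReal.div_self (volume_cube_ne_zero a hl) (volume_cube_ne_top a l), mul_one]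
      _ ≤ (2 : ℝ≥0∞) ^ (n + 3) * bmoNorm g := by
          gcongr
          calc (2 : ℝ≥0∞) = 2 ^ 1 := (pow_one 2).symm
          _ ≤ 2 ^ (n + 3) := pow_le_pow_right₀ one_le_two (by omega)
  · have hbmo : bmoNorm g = ⊤ := by
      rcases not_and_or.1 hint with h | h
      · exact top_unique ((cubeTerm_eq_top g hgm a l h) ▸ cubeTerm_le_bmoNorm g a hl)
      · exact top_unique ((cubeTerm_eq_top g hgm at' l h) ▸ cubeTerm_le_bmoNorm g at' hl)
    rw [hbmo, ENNReal.mul_top (by positivity)]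
    exact le_top

end Main
section Main2

variable {n : ℕ}

lemma dir2 (f : En (n+1) → ℝ) (hf : LocallyIntegrableOn f (upperHalf n) volume) :
    bmoNorm (zeroExt f) ≤ (2 : ℝ≥0∞) ^ (n + 3) * bmoNorm (oddExt f) := by
  have hgm := zeroExt_aesm f hf
  set g := zeroExt f with hg
  set F := oddExt f with hF
  refine bmoNorm_le g _ fun a l hl => ?_
  set Q := cube a l with hQ
  have hone : (1 : ℝ≥0∞) ≤ 2 ^ (n + 3) := one_le_two.trans
    (by calc (2 : ℝ≥0∞) = 2 ^ 1 := (pow_one 2).symm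
        _ ≤ 2 ^ (n + 3) := pow_le_pow_right₀ one_le_two (by omega))
  rcases le_or_gt 0 (a (Fin.last n)) with hcase | hneg
  · -- cube in the closed upper half-space: g = F a.e. on Q
    have hae : g =ᶠ[ae (volume.restrict Q)] F := by
      filter_upwards [ae_restrict_mem (measurableSet_cube a l),
        ae_restrict_of_ae (ae_lastC_ne (n := n))] with x hxQ hx0
      have h1 : a (Fin.last n) ≤ x (Fin.last n) := (hxQ (Fin.last n)).1
      have hpos : 0 < lastC x := lt_of_le_of_ne (hcase.trans h1) (Ne.symm hx0)
      simp only [hg, hF, zeroExt, oddExt, if_pos hpos]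
    have heq : cubeTerm g a l = cubeTerm F a l := by
      rw [cubeTerm, cubeTerm, average_congr hae,
        lintegral_congr_ae (hae.mono fun x hx => by rw [hx])]
    rw [heq]
    exact (cubeTerm_le_bmoNorm F a hl).trans (le_mul_of_one_le_left zero_le hone)
  · rcases le_or_gt (a (Fin.last n) + l) 0 with hcase2 | hpos
    · -- cube in the closed lower half-space : g vanishes on Q
      have hzero : ∀ x ∈ Q, g x = 0 := by
        intro x hx
        have h2 : x (Fin.last n) ≤ a (Fin.last n) + l := (hx (Fin.last n)).2
        have : ¬ (0 < lastC x) := not_lt.2 (h2.trans hcase2)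
        simp only [hg, zeroExt, if_neg this]
      have havg : (⨍ y in Q, g y) = 0 := by
        rw [setAverage_eq, setIntegral_congr_fun (measurableSet_cube a l) hzero,
          integral_zero, smul_zero]
      have hzero2 : cubeTerm g a l = 0 := by
        rw [cubeTerm, ← hQ, havg]
        have hint0 : (∫⁻ x in Q, ENNReal.ofReal |g x - 0|) = 0 := by
          have hae0 : ∀ᵐ x ∂(volume.restrict Q), ENNReal.ofReal |g x - 0| = 0 := by
            filter_upwards [ae_restrict_mem (measurableSet_cube a l)] with x hx
            simp [hzero x hx]
          rw [lintegral_congr_ae hae0, lintegral_zero]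
        rw [hint0, ENNReal.zero_div]
      rw [hzero2]
      exact zero_le
    · -- crossing cube
      set m := max (-(a (Fin.last n))) (a (Fin.last n) + l) with hm
      have hma : -(a (Fin.last n)) ≤ m := le_max_left _ _
      have hmb : a (Fin.last n) + l ≤ m := le_max_right _ _
      have hml : m ≤ l := max_le (by linarith) (by linarith)
      have hlm : l ≤ 2 * m := by
        rcases max_cases (-(a (Fin.last n))) (a (Fin.last n) + l) with ⟨h1, h2⟩ | ⟨h1, h2⟩ <;>
          rw [hm, h1] <;> linarith
      have hm0 : 0 < m := lt_of_lt_of_le hpos hmb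
      set b := WithLp.toLp 2 (Function.update a (Fin.last n) (-m)) with hb
      set Qs := cube b (2 * m) with hQs
      have hsub : Q ⊆ Qs := by
        intro x hx i
        rcases eq_or_ne i (Fin.last n) with hi | hi
        · subst hi
          have h1 := (hx (Fin.last n)).1
          have h2 := (hx (Fin.last n)).2
          rw [hb, WithLp.ofLp_toLp, Function.update_self]
          exact ⟨by linarith, by linarith⟩
        · have h1 := (hx i).1
          have h2 := (hx i).2
          rw [hb, WithLp.ofLp_toLp, Function.update_of_ne hi]
          exact ⟨h1, by linarith⟩
      have hQspre : reflx ⁻¹' Qs = Qs := by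
        rw [hQs, reflx_preimage_cube, hb, WithLp.ofLp_toLp, Function.update_self, Function.update_idem,
          show -(-m) - 2 * m = -m from by ring]
      -- the average of F over the symmetric cube Qs vanishes
      have havgF : (⨍ y in Qs, F y) = 0 := by
        have hIF : ∫ y in Qs, F y = 0 := by
          have h1 : ∫ x in Qs, F (reflx x) = ∫ y in Qs, F y := by
            have h1x := integral_reflx F Qs (measurableSet_cube b (2 * m))
            rwa [hQspre] at h1x
          have h2 : ∫ x in Qs, F (reflx x) = ∫ x in Qs, -F x :=
            integral_congr_ae (ae_restrict_of_ae (oddExt_reflx_ae f))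
          rw [h2, integral_neg] at h1
          linarith
        rw [setAverage_eq, hIF, smul_zero]
      set c₀ := ⨍ y in Q, g y with hc₀
      set X := ∫⁻ x in Qs, ENNReal.ofReal |F x - ⨍ y in Qs, F y| with hX
      have hIg : (∫⁻ x in Q, ENNReal.ofReal |g x|) ≤ X := by
        rw [hX, havgF]
        simp only [sub_zero]
        refine lintegral_mono' (Measure.restrict_mono hsub le_rfl) fun x => ?_
        exact ENNReal.ofReal_le_ofReal (abs_zeroExt_le f x)
      have hc0bound : ENNReal.ofReal |c₀| * volume Q ≤ ∫⁻ x in Q, ENNReal.ofReal |g x| := by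
        have hvQpos : 0 < (volume Q).toReal :=
          ENNReal.toReal_pos (volume_cube_ne_zero a hl) (volume_cube_ne_top a l)
        have h1 : ENNReal.ofReal |c₀| ≤ (volume Q)⁻¹ * ∫⁻ x in Q, ENNReal.ofReal |g x| := by
          rw [hc₀, setAverage_eq, smul_eq_mul, measureReal_def, abs_mul, abs_inv, abs_of_pos hvQpos,
            ENNReal.ofReal_mul (by positivity)]
          have h2 : ENNReal.ofReal |∫ x in Q, g x| ≤ ∫⁻ x in Q, ENNReal.ofReal |g x| := by
            have h3 := enorm_integral_le_lintegral_enorm (μ := volume.restrict Q) g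
            simp only [Real.enorm_eq_ofReal_abs] at h3
            exact h3
          have h4 : ENNReal.ofReal ((volume Q).toReal)⁻¹ = (volume Q)⁻¹ := by
            rw [ENNReal.ofReal_inv_of_pos hvQpos,
              ENNReal.ofReal_toReal (volume_cube_ne_top a l)]
          rw [h4]
          exact mul_le_mul_right h2 _
        calc ENNReal.ofReal |c₀| * volume Q
            ≤ ((volume Q)⁻¹ * ∫⁻ x in Q, ENNReal.ofReal |g x|) * volume Q :=
              mul_le_mul_left h1 _
          _ = ((volume Q)⁻¹ * volume Q) * ∫⁻ x in Q, ENNReal.ofReal |g x| := by ring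
          _ = ∫⁻ x in Q, ENNReal.ofReal |g x| := by
              rw [ENNReal.inv_mul_cancel (volume_cube_ne_zero a hl) (volume_cube_ne_top a l),
                one_mul]
      have key : (∫⁻ x in Q, ENNReal.ofReal |g x - c₀|) ≤ 2 * X := by
        calc (∫⁻ x in Q, ENNReal.ofReal |g x - c₀|)
            ≤ ∫⁻ x in Q, (ENNReal.ofReal |g x| + ENNReal.ofReal |c₀|) := by
              refine lintegral_mono fun x => ?_
              calc ENNReal.ofReal |g x - c₀| ≤ ENNReal.ofReal (|g x| + |c₀|) :=
                    ENNReal.ofReal_le_ofReal (abs_sub _ _)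
              _ ≤ _ := ENNReal.ofReal_add_le
          _ = (∫⁻ x in Q, ENNReal.ofReal |g x|) + ENNReal.ofReal |c₀| * volume Q := by
              rw [lintegral_add_right' _ aemeasurable_const, setLIntegral_const]
          _ ≤ X + X := add_le_add (hIg) (hc0bound.trans hIg)
          _ = 2 * X := (two_mul X).symm
      -- volume comparison
      have hvolcomp : volume Q ≠ 0 ∧ volume Qs ≤ 2 ^ (n + 1) * volume Q := by
        constructor
        · exact volume_cube_ne_zero a hl
        · rw [hQs, hQ, volume_cube, volume_cube]
          have h2m : ENNReal.ofReal (2 * m) ≤ 2 * ENNReal.ofReal l := by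
            rw [← ENNReal.ofReal_ofNat, ← ENNReal.ofReal_mul (by norm_num)]
            exact ENNReal.ofReal_le_ofReal
              (mul_le_mul_of_nonneg_left hml (by norm_num : (0:ℝ) ≤ 2))
          calc ENNReal.ofReal (2 * m) ^ (n + 1) ≤ (2 * ENNReal.ofReal l) ^ (n + 1) :=
                pow_le_pow_left' h2m _
          _ = 2 ^ (n + 1) * ENNReal.ofReal l ^ (n + 1) := mul_pow _ _ _
      calc cubeTerm g a l ≤ (2 * X) / volume Q := by
            rw [cubeTerm, ← hQ, ← hc₀]
            exact ENNReal.div_le_div_right key _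
        _ ≤ (2 * X) * (2 ^ (n + 1) / volume Qs) := by
            rw [div_eq_mul_inv]
            refine mul_le_mul_right ?_ _
            rw [ENNReal.le_div_iff_mul_le (Or.inl (volume_cube_ne_zero b (by positivity)))
              (Or.inl (volume_cube_ne_top b (2 * m)))]
            calc (volume Q)⁻¹ * volume Qs ≤ (volume Q)⁻¹ * (2 ^ (n + 1) * volume Q) :=
                  mul_le_mul_right hvolcomp.2 _
              _ = 2 ^ (n + 1) * ((volume Q)⁻¹ * volume Q) := by ring
              _ = 2 ^ (n + 1) := by
                  rw [ENNReal.inv_mul_cancel (volume_cube_ne_zero a hl)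
                    (volume_cube_ne_top a l), mul_one]
        _ = 2 ^ (n + 2) * (X / volume Qs) := by
            rw [div_eq_mul_inv, div_eq_mul_inv, pow_succ]
            ring
        _ ≤ 2 ^ (n + 2) * bmoNorm F := by
            refine mul_le_mul_right ?_ _
            exact cubeTerm_le_bmoNorm F b (by positivity)
        _ ≤ 2 ^ (n + 3) * bmoNorm F := by
            gcongr
            · exact one_le_two
            · omega

end Main2

end

/-- the odd extension and the zero extension of a function on the
upper half space have comparable BMO seminorms; in particular the zero extension
is in BMO iff the odd extension is. -/
theorem stmt1 (n : ℕ) :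
    ∃ c : ℝ, 0 < c ∧
      ∀ f : En (n + 1) → ℝ, LocallyIntegrableOn f (upperHalf n) volume →
        bmoNorm (oddExt f) ≤ ENNReal.ofReal c * bmoNorm (zeroExt f) ∧
        bmoNorm (zeroExt f) ≤ ENNReal.ofReal c * bmoNorm (oddExt f) ∧
        (bmoNorm (zeroExt f) < ⊤ ↔ bmoNorm (oddExt f) < ⊤) := by
  refine ⟨2 ^ (n + 3), by positivity, ?_⟩
  intro f hf
  have hC : ENNReal.ofReal ((2 : ℝ) ^ (n + 3)) = (2 : ℝ≥0∞) ^ (n + 3) := by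
    rw [ENNReal.ofReal_pow (by norm_num)]
    norm_num
  rw [hC]
  have htop : (2 : ℝ≥0∞) ^ (n + 3) < ⊤ :=
    ENNReal.pow_lt_top (by norm_num)
  refine ⟨dir1 f hf, dir2 f hf, ?_⟩
  constructor
  · intro h
    exact lt_of_le_of_lt (dir1 f hf) (ENNReal.mul_lt_top htop h)
  · intro h
    exact lt_of_le_of_lt (dir2 f hf) (ENNReal.mul_lt_top htop h)
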